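/- Let y₁,…,yₙ be i.i.d. standard Gaussian random variables, λ₁,…,λₙ real numbers not all zero, and a > 0. Then P(|∑ᵢ λᵢ(yᵢ² - 1)| > a) ≤ 2·exp(-κ·min{a²/∑ᵢλᵢ², a/maxᵢ|λᵢ|}) with κ = 1/8. -/

import Mathlib

open MeasureTheory ProbabilityTheory Real
open scoped ENNReal NNReal

lemma myPDF_zero_one (x : ℝ) :
    gaussianPDFReal 0 1 x = (Real.sqrt (2 * Real.pi))⁻¹ * Real.exp (-x ^ 2 / 2) := by
  simp [gaussianPDFReal]

lemma my_integral_gaussianReal (g : ℝ → ℝ) :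
    ∫ x, g x ∂(gaussianReal 0 1) = ∫ x, gaussianPDFReal 0 1 x * g x := by
  rw [gaussianReal_of_var_ne_zero _ one_ne_zero, gaussianPDF_def]
  have hmeas : Measurable fun x => (gaussianPDFReal 0 1 x).toNNReal :=
    (measurable_gaussianPDFReal 0 1).real_toNNReal
  rw [show (fun x => ENNReal.ofReal (gaussianPDFReal 0 1 x))
      = (fun x => ((gaussianPDFReal 0 1 x).toNNReal : ℝ≥0∞)) from rfl,
    integral_withDensity_eq_integral_smul hmeas]
  refine integral_congr_ae (Filter.Eventually.of_forall fun x => ?_)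
  simp [NNReal.smul_def, Real.coe_toNNReal _ (gaussianPDFReal_nonneg 0 1 x)]

lemma my_pdf_mul_exp (s x : ℝ) :
    gaussianPDFReal 0 1 x * Real.exp (s * (x ^ 2 - 1))
      = ((Real.sqrt (2 * Real.pi))⁻¹ * Real.exp (-s)) * Real.exp (-(1/2 - s) * x ^ 2) := by
  rw [myPDF_zero_one, mul_assoc, ← Real.exp_add, mul_assoc, ← Real.exp_add]
  congr 2
  ring

lemma my_integrable_exp {s : ℝ} (hs : s < 1/2) :
    Integrable (fun x => Real.exp (s * (x ^ 2 - 1))) (gaussianReal 0 1) := by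
  have hb : 0 < 1/2 - s := by linarith
  rw [gaussianReal_of_var_ne_zero _ one_ne_zero, gaussianPDF_def]
  have hmeas : Measurable fun x => (gaussianPDFReal 0 1 x).toNNReal :=
    (measurable_gaussianPDFReal 0 1).real_toNNReal
  rw [show (fun x => ENNReal.ofReal (gaussianPDFReal 0 1 x))
      = (fun x => ((gaussianPDFReal 0 1 x).toNNReal : ℝ≥0∞)) from rfl,
    integrable_withDensity_iff_integrable_smul hmeas]
  have heq : (fun x : ℝ => (gaussianPDFReal 0 1 x).toNNReal • Real.exp (s * (x ^ 2 - 1)))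
      = fun x => ((Real.sqrt (2 * Real.pi))⁻¹ * Real.exp (-s)) * Real.exp (-(1/2 - s) * x ^ 2) := by
    funext x
    rw [NNReal.smul_def, Real.coe_toNNReal _ (gaussianPDFReal_nonneg 0 1 x), smul_eq_mul, my_pdf_mul_exp]
  rw [heq]
  exact (integrable_exp_neg_mul_sq hb).const_mul _

lemma my_integral_exp {s : ℝ} (hs : s < 1/2) :
    ∫ x, Real.exp (s * (x ^ 2 - 1)) ∂(gaussianReal 0 1)
      = Real.exp (-s) * (Real.sqrt (1 - 2 * s))⁻¹ := by
  have hb : 0 < 1/2 - s := by linarith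
  rw [my_integral_gaussianReal]
  simp_rw [my_pdf_mul_exp s]
  rw [integral_const_mul, integral_gaussian]
  have key : (Real.sqrt (2 * Real.pi))⁻¹ * Real.sqrt (Real.pi / (1/2 - s))
      = (Real.sqrt (1 - 2 * s))⁻¹ := by
    rw [← Real.sqrt_inv, ← Real.sqrt_mul (by positivity), ← Real.sqrt_inv]
    congr 1
    rw [eq_comm, inv_eq_iff_eq_inv, eq_comm]
    field_simp
  rw [mul_assoc, mul_comm (Real.exp (-s)), ← mul_assoc, key, mul_comm]

lemma my_poly_le {s : ℝ} (hs : |s| ≤ 1/4) :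
    1 ≤ Real.exp (2 * s ^ 2 + s) * Real.sqrt (1 - 2 * s) := by
  obtain ⟨hs1, hs2⟩ := abs_le.mp hs
  have h1 : (0:ℝ) < 1 - 2 * s := by linarith
  have hsq : (Real.exp (2 * s ^ 2 + s) * Real.sqrt (1 - 2 * s)) ^ 2
      = Real.exp (4 * s ^ 2 + 2 * s) * (1 - 2 * s) := by
    rw [mul_pow, Real.sq_sqrt h1.le, sq, ← Real.exp_add]
    ring_nf
  have key : 1 ≤ Real.exp (4 * s ^ 2 + 2 * s) * (1 - 2 * s) := by
    rcases le_total s 0 with h | h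
    · have hexp : 1 + (4 * s ^ 2 + 2 * s) ≤ Real.exp (4 * s ^ 2 + 2 * s) := by
        have := Real.add_one_le_exp (4 * s ^ 2 + 2 * s); linarith
      nlinarith [mul_le_mul_of_nonneg_right hexp h1.le, sq_nonneg s]
    · have hx : (0:ℝ) ≤ 4 * s ^ 2 + 2 * s := by positivity
      have hexp : 1 + (4 * s ^ 2 + 2 * s) + (4 * s ^ 2 + 2 * s) ^ 2 / 2
          ≤ Real.exp (4 * s ^ 2 + 2 * s) := by
        have := Real.sum_le_exp_of_nonneg hx 3
        simp [Finset.sum_range_succ] at this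
        nlinarith [this]
      nlinarith [mul_le_mul_of_nonneg_right hexp h1.le, sq_nonneg s, sq_nonneg (s * (1 - 4 * s)),
        mul_nonneg h (by linarith : (0:ℝ) ≤ 1 - 4 * s)]
  have hpos : 0 < Real.exp (2 * s ^ 2 + s) * Real.sqrt (1 - 2 * s) :=
    mul_pos (Real.exp_pos _) (Real.sqrt_pos.mpr h1)
  nlinarith [hsq, key, hpos]

lemma my_factor_le {s : ℝ} (hs : |s| ≤ 1/4) :
    ∫ x, Real.exp (s * (x ^ 2 - 1)) ∂(gaussianReal 0 1) ≤ Real.exp (2 * s ^ 2) := by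
  obtain ⟨hs1, hs2⟩ := abs_le.mp hs
  have h1 : (0:ℝ) < 1 - 2 * s := by linarith
  rw [my_integral_exp (by linarith), ← div_eq_mul_inv, div_le_iff₀ (Real.sqrt_pos.mpr h1)]
  calc Real.exp (-s) = Real.exp (-s) * 1 := (mul_one _).symm
    _ ≤ Real.exp (-s) * (Real.exp (2 * s ^ 2 + s) * Real.sqrt (1 - 2 * s)) :=
        mul_le_mul_of_nonneg_left (my_poly_le hs) (Real.exp_pos _).le
    _ = Real.exp (2 * s ^ 2) * Real.sqrt (1 - 2 * s) := by
        rw [← mul_assoc, ← Real.exp_add]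
        congr 2
        ring

lemma my_pi_integrable {n : ℕ} (f : Fin n → ℝ → ℝ)
    (hf : ∀ i, Integrable (f i) (gaussianReal 0 1)) :
    Integrable (fun y : Fin n → ℝ => ∏ i, f i (y i))
      (Measure.pi fun _ : Fin n => gaussianReal 0 1) := by
  letI : MeasureSpace ℝ := ⟨gaussianReal 0 1⟩
  haveI : SigmaFinite (volume : Measure ℝ) := inferInstanceAs (SigmaFinite (gaussianReal 0 1))
  exact MeasureTheory.Integrable.fintype_prod (f := f) hf

lemma my_pi_integral {n : ℕ} (f : Fin n → ℝ → ℝ) :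
    ∫ y, ∏ i, f i (y i) ∂(Measure.pi fun _ : Fin n => gaussianReal 0 1)
      = ∏ i, ∫ x, f i x ∂(gaussianReal 0 1) := by
  letI : MeasureSpace ℝ := ⟨gaussianReal 0 1⟩
  haveI : SigmaFinite (volume : Measure ℝ) := inferInstanceAs (SigmaFinite (gaussianReal 0 1))
  exact MeasureTheory.integral_fintype_prod_eq_prod (fun i => f i)

lemma my_mgf_bound {n : ℕ} (lam : Fin n → ℝ) (t : ℝ) (h : ∀ i, |t * lam i| ≤ 1/4) :
    Integrable (fun y : Fin n → ℝ => Real.exp (t * ∑ i, lam i * ((y i) ^ 2 - 1)))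
      (Measure.pi fun _ : Fin n => gaussianReal 0 1) ∧
    ∫ y, Real.exp (t * ∑ i, lam i * ((y i) ^ 2 - 1))
        ∂(Measure.pi fun _ : Fin n => gaussianReal 0 1)
      ≤ Real.exp (2 * t ^ 2 * ∑ i, lam i ^ 2) := by
  have hfun : (fun y : Fin n → ℝ => Real.exp (t * ∑ i, lam i * ((y i) ^ 2 - 1)))
      = fun y => ∏ i, Real.exp (t * lam i * ((y i) ^ 2 - 1)) := by
    funext y
    rw [← Real.exp_sum]
    congr 1
    rw [Finset.mul_sum]
    exact Finset.sum_congr rfl fun i _ => by ring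
  have hint : ∀ i, Integrable (fun x => Real.exp (t * lam i * (x ^ 2 - 1))) (gaussianReal 0 1) :=
    fun i => my_integrable_exp (by have := h i; have := le_abs_self (t * lam i); linarith)
  constructor
  · rw [hfun]; exact my_pi_integrable _ hint
  · rw [hfun, my_pi_integral (fun i x => Real.exp (t * lam i * (x ^ 2 - 1)))]
    calc ∏ i, ∫ x, Real.exp (t * lam i * (x ^ 2 - 1)) ∂(gaussianReal 0 1)
        ≤ ∏ i, Real.exp (2 * (t * lam i) ^ 2) :=
          Finset.prod_le_prod (fun i _ => integral_nonneg fun x => (Real.exp_pos _).le)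
            (fun i _ => my_factor_le (h i))
      _ = Real.exp (∑ i, 2 * (t * lam i) ^ 2) := (Real.exp_sum _ _).symm
      _ = Real.exp (2 * t ^ 2 * ∑ i, lam i ^ 2) := by
          congr 1
          rw [Finset.mul_sum]
          exact Finset.sum_congr rfl fun i _ => by ring

theorem hanson_wright_diagonal_eighth (n : ℕ) (lam : Fin n → ℝ) (hlam : lam ≠ 0)
    (a : ℝ) (ha : 0 < a) :
    (Measure.pi fun _ : Fin n => gaussianReal 0 1)
        {y | a < |∑ i, lam i * ((y i) ^ 2 - 1)|}
      ≤ ENNReal.ofReal (2 * Real.exp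
          (-(1/8) * min (a ^ 2 / ∑ i, lam i ^ 2) (a / ⨆ i, |lam i|))) := by
  classical
  set μ := Measure.pi fun _ : Fin n => gaussianReal 0 1 with hμ
  set X : (Fin n → ℝ) → ℝ := fun y => ∑ i, lam i * ((y i) ^ 2 - 1) with hX
  obtain ⟨i₀, hi₀'⟩ := Function.ne_iff.mp hlam
  have hi₀ : lam i₀ ≠ 0 := by simpa using hi₀'
  set M : ℝ := ⨆ i, |lam i| with hMdef
  set S : ℝ := ∑ i, lam i ^ 2 with hSdef
  have hbdd : BddAbove (Set.range fun i => |lam i|) :=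
    Set.Finite.bddAbove (Set.finite_range _)
  have hMle : ∀ i, |lam i| ≤ M := fun i => le_ciSup hbdd i
  have hM : 0 < M := lt_of_lt_of_le (abs_pos.mpr hi₀) (hMle i₀)
  have hS : 0 < S := by
    have h1 : 0 < lam i₀ ^ 2 := by positivity
    have h2 : lam i₀ ^ 2 ≤ S :=
      Finset.single_le_sum (fun i _ => sq_nonneg (lam i)) (Finset.mem_univ i₀)
    linarith
  set t : ℝ := min (a / (4 * S)) (1 / (4 * M)) with htdef
  have ht0 : 0 < t := lt_min (by positivity) (by positivity)
  have hts : ∀ i, |t * lam i| ≤ 1/4 := by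
    intro i
    rw [abs_mul, abs_of_pos ht0]
    calc t * |lam i| ≤ (1 / (4 * M)) * M :=
          mul_le_mul (min_le_right _ _) (hMle i) (abs_nonneg _) (by positivity)
      _ = 1/4 := by field_simp
  have htsneg : ∀ i, |(-t) * lam i| ≤ 1/4 := fun i => by
    rw [neg_mul, abs_neg]; exact hts i
  obtain ⟨hint₁, hbd₁⟩ := my_mgf_bound lam t hts
  obtain ⟨hint₂, hbd₂⟩ := my_mgf_bound lam (-t) htsneg
  set C : ℝ := Real.exp (-(t * a) + 2 * t ^ 2 * S) with hCdef
  -- upper tail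
  have h1 : (μ {y | a ≤ X y}).toReal ≤ C := by
    refine (measure_ge_le_exp_mul_mgf a ht0.le hint₁).trans ?_
    have hmgf : mgf X μ t ≤ Real.exp (2 * t ^ 2 * S) := hbd₁
    calc Real.exp (-t * a) * mgf X μ t
        ≤ Real.exp (-t * a) * Real.exp (2 * t ^ 2 * S) :=
          mul_le_mul_of_nonneg_left hmgf (Real.exp_pos _).le
      _ = C := by rw [← Real.exp_add]; congr 1; ring
  -- lower tail
  have h2 : (μ {y | X y ≤ -a}).toReal ≤ C := by
    refine (measure_le_le_exp_mul_mgf (-a) (neg_nonpos.mpr ht0.le) hint₂).trans ?_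
    have hmgf : mgf X μ (-t) ≤ Real.exp (2 * t ^ 2 * S) := by
      refine hbd₂.trans_eq ?_
      congr 1; ring
    calc Real.exp (-(-t) * -a) * mgf X μ (-t)
        ≤ Real.exp (-(-t) * -a) * Real.exp (2 * t ^ 2 * S) :=
          mul_le_mul_of_nonneg_left hmgf (Real.exp_pos _).le
      _ = C := by rw [← Real.exp_add]; congr 1; ring
  -- exponent optimization
  have hkey : -(t * a) + 2 * t ^ 2 * S ≤ -(1/8) * min (a ^ 2 / S) (a / M) := by
    rcases le_total (a / (4 * S)) (1 / (4 * M)) with h | h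
    · have ht : t = a / (4 * S) := min_eq_left h
      have hexp : -(t * a) + 2 * t ^ 2 * S = -(1/8) * (a ^ 2 / S) := by
        rw [ht]; field_simp; ring
      rw [hexp]
      have : min (a ^ 2 / S) (a / M) ≤ a ^ 2 / S := min_le_left _ _
      nlinarith
    · have ht : t = 1 / (4 * M) := min_eq_right h
      have hSM : S ≤ a * M := by
        rw [div_le_div_iff₀ (by positivity) (by positivity)] at h
        nlinarith
      have hexp : -(t * a) + 2 * t ^ 2 * S ≤ -(1/8) * (a / M) := by
        rw [ht]
        have e1 : -(1 / (4 * M) * a) + 2 * (1 / (4 * M)) ^ 2 * S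
            = (-2 * a * M + S) / (8 * M ^ 2) := by field_simp; ring
        have e2 : -(1/8) * (a / M) = (-a * M) / (8 * M ^ 2) := by field_simp
        rw [e1, e2]
        have hnum : -2 * a * M + S ≤ -a * M := by nlinarith
        exact (div_le_div_iff_of_pos_right (by positivity)).mpr hnum
      have : min (a ^ 2 / S) (a / M) ≤ a / M := min_le_right _ _
      nlinarith
  -- assemble
  have hsub : {y : Fin n → ℝ | a < |X y|} ⊆ {y | a ≤ X y} ∪ {y | X y ≤ -a} := by
    intro y hy
    simp only [Set.mem_setOf_eq] at hy
    rcases lt_abs.mp hy with h | h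
    · exact Or.inl h.le
    · exact Or.inr (show X y ≤ -a by linarith)
  have hCpos : 0 < C := Real.exp_pos _
  calc μ {y | a < |X y|} ≤ μ ({y | a ≤ X y} ∪ {y | X y ≤ -a}) := measure_mono hsub
    _ ≤ μ {y | a ≤ X y} + μ {y | X y ≤ -a} := measure_union_le _ _
    _ ≤ ENNReal.ofReal C + ENNReal.ofReal C := by
        gcongr
        · rw [← ENNReal.ofReal_toReal (measure_ne_top μ _)]
          exact ENNReal.ofReal_le_ofReal h1
        · rw [← ENNReal.ofReal_toReal (measure_ne_top μ _)]
          exact ENNReal.ofReal_le_ofReal h2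
    _ = ENNReal.ofReal (2 * C) := by
        rw [← ENNReal.ofReal_add hCpos.le hCpos.le]; congr 1; ring
    _ ≤ ENNReal.ofReal (2 * Real.exp (-(1/8) * min (a ^ 2 / S) (a / M))) := by
        apply ENNReal.ofReal_le_ofReal
        have := Real.exp_le_exp.mpr hkey
        linarith
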